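/- The vertex set is finite: if Λ ⊂ V is a full-rank lattice and Φ a finite list of nonzero vectors of Λ spanning V, then the set 𝒱(Φ) of points s of the torus T = Hom(Λ, U(1)) such that Φ_s = [α ∈ Φ : s^α = 1] spans V is finite. -/

import Mathlib

open Submodule Module ZSpan
lemma aux_torsion
    {V : Type*} [NormedAddCommGroup V] [NormedSpace ℝ V] [FiniteDimensional ℝ V]
    (Λ : Submodule ℤ V) [DiscreteTopology Λ]
    (S : Set V) (hS : S.Finite) (hSΛ : S ⊆ (Λ : Set V)) (hSspan : span ℝ S = ⊤)
    {x : V} (hx : x ∈ Λ) : ∃ k : ℤ, k ≠ 0 ∧ k • x ∈ span ℤ S := by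
  obtain ⟨t, ht_inc, ht_span, ht_lin⟩ := exists_linearIndependent ℝ S
  let e : Basis t ℝ V := Basis.mk ht_lin (by rw [Subtype.range_coe_subtype, Set.setOf_mem_eq, ht_span, hSspan])
  have : Fintype t := (hS.subset ht_inc).fintype
  have h_range : Set.range (e : t → V) ⊆ S := by
    rw [Basis.coe_mk, Subtype.range_coe_subtype]; exact fun y hy => ht_inc hy
  have h_mapsto : Set.MapsTo (fun n : ℤ => fract e (n • x)) Set.univ
      (Metric.closedBall 0 (∑ i, ‖e i‖) ∩ (Λ : Set V)) := by
    rw [Set.mapsTo_inter, Set.mapsTo_univ_iff, Set.mapsTo_univ_iff]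
    refine ⟨fun _ ↦ mem_closedBall_zero_iff.mpr (norm_fract_le e _), fun n => ?_⟩
    rw [fract_apply]
    refine sub_mem (zsmul_mem hx _) ?_
    have : span ℤ (Set.range (e : t → V)) ≤ Λ := by
      rw [span_le]; exact fun y hy => hSΛ (h_range hy)
    exact this (coe_mem _)
  have h_finite : Set.Finite (Metric.closedBall 0 (∑ i, ‖e i‖) ∩ (Λ : Set V)) := by
    change ((_ : Set V) ∩ Λ.toAddSubgroup).Finite
    have : DiscreteTopology Λ.toAddSubgroup := (inferInstance : DiscreteTopology Λ)
    exact Metric.finite_isBounded_inter_isClosed (isDiscrete_iff_discreteTopology.mpr this) Metric.isBounded_closedBall AddSubgroup.isClosed_of_discrete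
  obtain ⟨n, -, m, -, h_neq, h_eq⟩ := Set.Infinite.exists_ne_map_eq_of_mapsTo
    Set.infinite_univ h_mapsto h_finite
  refine ⟨-n + m, ?_, ?_⟩
  · intro h; apply h_neq; omega
  · have := (fract_eq_fract e _ _).mp h_eq
    rw [← neg_smul, ← add_smul] at this
    exact span_mono h_range this
lemma aux_finite
    {V : Type*} [NormedAddCommGroup V] [NormedSpace ℝ V] [FiniteDimensional ℝ V]
    (Λ : Submodule ℤ V) [DiscreteTopology Λ] [IsZLattice ℝ Λ]
    (S : Set V) (hS : S.Finite) (hSΛ : S ⊆ (Λ : Set V)) (hSspan : span ℝ S = ⊤) :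
    {s : AddChar Λ Circle | ∀ y : Λ, (y : V) ∈ S → s y = 1}.Finite := by
  classical
  set M' : Submodule ℤ Λ := span ℤ {y : Λ | (y : V) ∈ S} with hM'
  have hmap : Submodule.map Λ.subtype M' = span ℤ S := by
    rw [hM', Submodule.map_span]
    congr 1
    ext v
    constructor
    · rintro ⟨y, hy, rfl⟩; exact hy
    · intro hv; exact ⟨⟨v, hSΛ hv⟩, hv, rfl⟩
  -- triviality of characters in our set on M'
  have htriv : ∀ s ∈ {s : AddChar Λ Circle | ∀ y : Λ, (y : V) ∈ S → s y = 1},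
      ∀ y ∈ M', s y = 1 := by
    intro s hs y hy
    induction hy using Submodule.span_induction with
    | mem z hz => exact hs z hz
    | zero => exact s.map_zero_eq_one
    | add a b _ _ ha hb => rw [AddChar.map_add_eq_mul, ha, hb, mul_one]
    | smul k a _ ha => rw [AddChar.map_zsmul_eq_zpow, ha, one_zpow]
  -- the quotient is finite
  have htor : Module.IsTorsion ℤ (Λ ⧸ M') := by
    intro x
    obtain ⟨x, rfl⟩ := Submodule.Quotient.mk_surjective M' x
    obtain ⟨k, hk0, hk⟩ := aux_torsion Λ S hS hSΛ hSspan x.2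
    have hkx : k • x ∈ M' := by
      rw [← hmap] at hk
      obtain ⟨y, hy, hyeq⟩ := hk
      have : y = k • x := Subtype.coe_injective hyeq
      rwa [this] at hy
    refine ⟨⟨k, mem_nonZeroDivisors_of_ne_zero hk0⟩, ?_⟩
    rw [Submonoid.mk_smul, ← Submodule.Quotient.mk_smul, Submodule.Quotient.mk_eq_zero]
    exact hkx
  have : Module.Finite ℤ Λ := inferInstance
  have hfin : Finite (Λ ⧸ M') := Module.finite_of_fg_torsion _ htor
  set k := Nat.card (Λ ⧸ M') with hkdef
  have hk0 : 0 < k := Nat.card_pos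
  have hks : ∀ x : Λ, k • x ∈ M' := by
    intro x
    have : k • (Submodule.Quotient.mk x : Λ ⧸ M') = 0 := card_nsmul_eq_zero'
    rwa [← Submodule.Quotient.mk_smul, Submodule.Quotient.mk_eq_zero] at this
  -- roots of unity in Circle are finite
  have hC : ({z : Circle | z ^ k = 1}).Finite := by
    have h1 : ({w : ℂ | w ^ k = 1}).Finite := by
      have he : {w : ℂ | w ^ k = 1}
          = {w | Polynomial.IsRoot (Polynomial.X ^ k - Polynomial.C 1) w} := by
        ext w; simp [Polynomial.IsRoot, sub_eq_zero]
      rw [he]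
      exact Polynomial.finite_setOf_isRoot (Polynomial.X_pow_sub_C_ne_zero hk0 1)
    have he2 : {z : Circle | z ^ k = 1} = (fun z : Circle => (z : ℂ)) ⁻¹' {w : ℂ | w ^ k = 1} := by
      ext z
      simp only [Set.mem_setOf_eq, Set.mem_preimage]
      have hzc : ((z ^ k : Circle) : ℂ) = (z : ℂ) ^ k := by
        induction k with
        | zero => simp
        | succ n ih => rw [pow_succ, pow_succ, ← ih]; rfl
      constructor
      · intro h; rw [← hzc, h]; rfl
      · intro h
        apply Subtype.coe_injective
        show ((z ^ k : Circle) : ℂ) = ((1 : Circle) : ℂ)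
        rw [hzc, h]; rfl
    rw [he2]
    exact Set.Finite.preimage (Subtype.coe_injective.injOn) h1
  -- inject into functions on a basis
  let b := Module.Free.chooseBasis ℤ Λ
  set ι := Module.Free.ChooseBasisIndex ℤ Λ
  have hFin : ({f : ι → Circle | ∀ i, f i ^ k = 1}).Finite := by
    have : {f : ι → Circle | ∀ i, f i ^ k = 1}
        = Set.pi Set.univ (fun _ : ι => {z : Circle | z ^ k = 1}) := by
      ext f; simp [Set.mem_pi]
    rw [this]
    exact Set.Finite.pi (fun _ => hC)
  refine Set.Finite.of_finite_image (f := fun s => fun i : ι => s (b i)) ?_ ?_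
  · refine hFin.subset ?_
    rintro _ ⟨s, hs, rfl⟩
    intro i
    rw [← AddChar.map_nsmul_eq_pow]
    exact htriv s hs _ (hks (b i))
  · intro s hs t ht h
    have : ∀ x : Λ, s x = t x := by
      intro x
      have hx : x ∈ span ℤ (Set.range b) := by rw [b.span_eq]; trivial
      induction hx using Submodule.span_induction with
      | mem z hz => obtain ⟨i, rfl⟩ := hz; exact congrFun h i
      | zero => rw [s.map_zero_eq_one, t.map_zero_eq_one]
      | add a c _ _ ha hc => rw [AddChar.map_add_eq_mul, AddChar.map_add_eq_mul, ha, hc]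
      | smul n a _ ha => rw [AddChar.map_zsmul_eq_zpow, AddChar.map_zsmul_eq_zpow, ha]
    exact DFunLike.ext s t this

/-- the vertex set is finite: for a full-rank lattice `Λ ⊂ V` and a finite
list `Φ` of nonzero lattice vectors spanning `V`, the set of characters `s` of `Λ` such
that `Φ_s = [α ∈ Φ : s^α = 1]` spans `V` is finite. -/
theorem vertex_set_finite
    {V : Type*} [NormedAddCommGroup V] [NormedSpace ℝ V] [FiniteDimensional ℝ V]
    (Λ : Submodule ℤ V) [DiscreteTopology Λ] [IsZLattice ℝ Λ]
    {N : ℕ} (α : Fin N → V) (hα0 : ∀ j, α j ≠ 0) (hΛ : ∀ j, α j ∈ Λ)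
    (hspan : Submodule.span ℝ (Set.range α) = ⊤) :
    {s : AddChar Λ Circle |
      Submodule.span ℝ {v : V | ∃ j, v = α j ∧ s ⟨α j, hΛ j⟩ = 1} = ⊤}.Finite := by
  classical
  have hunion : {s : AddChar Λ Circle |
      Submodule.span ℝ {v : V | ∃ j, v = α j ∧ s ⟨α j, hΛ j⟩ = 1} = ⊤} ⊆
      ⋃ T : Finset (Fin N), {s : AddChar Λ Circle |
        Submodule.span ℝ (α '' ↑T) = ⊤ ∧ ∀ y : Λ, (y : V) ∈ α '' ↑T → s y = 1} := by
    intro s hs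
    rw [Set.mem_iUnion]
    refine ⟨Finset.univ.filter (fun j => s ⟨α j, hΛ j⟩ = 1), ?_, ?_⟩
    · refine top_unique ?_
      rw [← hs]
      refine span_mono ?_
      rintro v ⟨j, rfl, hj⟩
      exact ⟨j, by simp [hj], rfl⟩
    · rintro y ⟨j, hj, hjy⟩
      rw [Finset.coe_filter, Set.mem_setOf_eq] at hj
      have : y = ⟨α j, hΛ j⟩ := Subtype.coe_injective hjy.symm
      rw [this]
      exact hj.2
  refine Set.Finite.subset (Set.finite_iUnion fun T => ?_) hunion
  by_cases hsp : Submodule.span ℝ (α '' (↑T : Set (Fin N))) = ⊤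
  · refine (aux_finite Λ (α '' ↑T) (T.finite_toSet.image α) ?_ hsp).subset ?_
    · rintro v ⟨j, -, rfl⟩; exact hΛ j
    · intro s hs; exact hs.2
  · refine Set.Finite.subset (Set.finite_empty) ?_
    intro s hs
    exact absurd hs.1 hsp
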